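/- arXiv:2110.08108 — 2 statements merged into one kernel-verified Lean document; each statement's English description precedes it below -/
import Mathlib

section
/- For every positive integer n, Σ_{π ⊢ n} mex(π) = Σ_{m≥0} p(n − m(m+1)/2), where p(j)=0 for j<0. -/
open Finset

/-- The minimal excludant of a partition: the least positive integer not a part. -/
noncomputable def mex {n : ℕ} (π : Nat.Partition n) : ℕ :=
  sInf {m : ℕ | 0 < m ∧ m ∉ π.parts}

/-- Number of partitions of `n` with minimal excludant `m`. -/
noncomputable def pmex (m n : ℕ) : ℕ :=
  ((Finset.univ : Finset (Nat.Partition n)).filter (fun π => mex π = m)).card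

/-- The partition function, extended by `0` on negative integers. -/
noncomputable def pz (k : ℤ) : ℕ := if 0 ≤ k then Fintype.card (Nat.Partition k.toNat) else 0

/-- Number of partitions of `m` into distinct parts. -/
def qdist (m : ℕ) : ℕ := (Nat.Partition.distincts m).card

/-- A two-colored distinct-parts partition of `n`: a set of distinct (part, color)
pairs with positive parts summing to `n`. -/
def IsTCD (n : ℕ) (s : Finset (ℕ × Fin 2)) : Prop :=
  (∀ p ∈ s, 0 < p.1) ∧ ∑ p ∈ s, p.1 = n

noncomputable def D2 (n : ℕ) : ℕ := Set.ncard {s : Finset (ℕ × Fin 2) | IsTCD n s}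
noncomputable def D2e (n : ℕ) : ℕ :=
  Set.ncard {s : Finset (ℕ × Fin 2) | IsTCD n s ∧ Even s.card}
noncomputable def D2o (n : ℕ) : ℕ :=
  Set.ncard {s : Finset (ℕ × Fin 2) | IsTCD n s ∧ Odd s.card}

lemma Icc_sum (m : ℕ) : ∑ i ∈ Finset.Icc 1 m, i = m * (m+1) / 2 := by
  induction m with
  | zero => simp
  | succ k ih =>
    rw [Finset.sum_Icc_succ_top (by omega), ih]
    have : (k+1)*(k+1+1) = k*(k+1) + 2*(k+1) := by ring
    omega

lemma Icc_val_sum (m : ℕ) : (Finset.Icc 1 m).1.sum = m * (m+1) / 2 := by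
  have h : ∑ i ∈ Finset.Icc 1 m, i = (Finset.Icc 1 m).1.sum := by
    rw [Finset.sum, Multiset.map_id']
  rw [← h]; exact Icc_sum m

lemma notMem_parts_of_big {n : ℕ} (π : Nat.Partition n) : (n+1) ∉ π.parts := by
  intro h
  have := Multiset.le_sum_of_mem h
  rw [π.parts_sum] at this
  omega

lemma mex_set_nonempty {n : ℕ} (π : Nat.Partition n) :
    {m : ℕ | 0 < m ∧ m ∉ π.parts}.Nonempty :=
  ⟨n+1, Nat.succ_pos n, notMem_parts_of_big π⟩

lemma mex_le {n : ℕ} (π : Nat.Partition n) : mex π ≤ n + 1 :=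
  Nat.sInf_le ⟨Nat.succ_pos n, notMem_parts_of_big π⟩

lemma mex_gt_iff {n : ℕ} (π : Nat.Partition n) (m : ℕ) :
    m < mex π ↔ ∀ i ∈ Finset.Icc 1 m, i ∈ π.parts := by
  constructor
  · intro h i hi
    rw [Finset.mem_Icc] at hi
    by_contra hni
    have h1 : mex π ≤ i :=
      Nat.sInf_le (show i ∈ {m : ℕ | 0 < m ∧ m ∉ π.parts} from ⟨by omega, hni⟩)
    have : mex π ≤ m := le_trans h1 hi.2
    omega
  · intro h
    have hm := Nat.sInf_mem (mex_set_nonempty π)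
    by_contra hc
    push_neg at hc
    have : mex π ∈ π.parts := h _ (Finset.mem_Icc.mpr ⟨hm.1, hc⟩)
    exact hm.2 this

noncomputable def shrink {n : ℕ} (m : ℕ) (π : Nat.Partition n)
    (h : ∀ i ∈ Finset.Icc 1 m, i ∈ π.parts) : Nat.Partition (n - m*(m+1)/2) where
  parts := π.parts - (Finset.Icc 1 m).1
  parts_pos := fun hi => π.parts_pos (Multiset.mem_of_le (tsub_le_self) hi)
  parts_sum := by
    have hle : (Finset.Icc 1 m).1 ≤ π.parts :=
      (Multiset.le_iff_subset (Finset.Icc 1 m).nodup).mpr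
        (fun i hi => h i (Finset.mem_def.mpr hi))
    have h2 : (π.parts - (Finset.Icc 1 m).1) + (Finset.Icc 1 m).1 = π.parts :=
      tsub_add_cancel_of_le hle
    have h3 := congrArg Multiset.sum h2
    rw [Multiset.sum_add, π.parts_sum, Icc_val_sum] at h3
    omega

noncomputable def grow (k m : ℕ) (σ : Nat.Partition k) : Nat.Partition (k + m*(m+1)/2) where
  parts := σ.parts + (Finset.Icc 1 m).1
  parts_pos := by
    intro i hi
    rcases Multiset.mem_add.mp hi with h | h
    · exact σ.parts_pos h
    · have := Finset.mem_Icc.mp (Finset.mem_def.mpr h); omega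
  parts_sum := by rw [Multiset.sum_add, σ.parts_sum, Icc_val_sum]

def copyP {a b : ℕ} (h : a = b) (π : Nat.Partition a) : Nat.Partition b :=
  ⟨π.parts, π.parts_pos, h ▸ π.parts_sum⟩

lemma card_contains (n m : ℕ) :
    ((Finset.univ : Finset (Nat.Partition n)).filter
      (fun π => ∀ i ∈ Finset.Icc 1 m, i ∈ π.parts)).card
    = pz ((n:ℤ) - (m*(m+1)/2 : ℕ)) := by
  classical
  by_cases h : m*(m+1)/2 ≤ n
  · rw [pz, if_pos (by omega)]
    have htn : (((n:ℤ) - (m*(m+1)/2 : ℕ))).toNat = n - m*(m+1)/2 := by omega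
    rw [htn, ← Finset.card_univ]
    refine Finset.card_bij'
      (fun π hπ => shrink m π (by simpa using (Finset.mem_filter.mp hπ).2))
      (fun σ _ => copyP (by omega) (grow (n - m*(m+1)/2) m σ))
      (fun _ _ => Finset.mem_univ _) ?_ ?_ ?_
    · intro σ _
      rw [Finset.mem_filter]
      refine ⟨Finset.mem_univ _, fun i hi => ?_⟩
      show i ∈ σ.parts + (Finset.Icc 1 m).1
      exact Multiset.mem_add.mpr (Or.inr (Finset.mem_def.mp hi))
    · intro π hπ
      have hmem := (Finset.mem_filter.mp hπ).2
      have hle : (Finset.Icc 1 m).1 ≤ π.parts :=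
        (Multiset.le_iff_subset (Finset.Icc 1 m).nodup).mpr
          (fun i hi => hmem i (Finset.mem_def.mpr hi))
      ext1
      show (π.parts - (Finset.Icc 1 m).1) + (Finset.Icc 1 m).1 = π.parts
      exact tsub_add_cancel_of_le hle
    · intro σ _
      ext1
      show (σ.parts + (Finset.Icc 1 m).1) - (Finset.Icc 1 m).1 = σ.parts
      exact add_tsub_cancel_right σ.parts _
  · rw [pz, if_neg (by omega)]
    rw [Finset.card_eq_zero]
    refine Finset.eq_empty_of_forall_notMem fun π hπ => ?_
    have hmem := (Finset.mem_filter.mp hπ).2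
    have hle : (Finset.Icc 1 m).1 ≤ π.parts :=
      (Multiset.le_iff_subset (Finset.Icc 1 m).nodup).mpr
        (fun i hi => hmem i (Finset.mem_def.mpr hi))
    have h2 : (π.parts - (Finset.Icc 1 m).1) + (Finset.Icc 1 m).1 = π.parts :=
      tsub_add_cancel_of_le hle
    have h3 := congrArg Multiset.sum h2
    rw [Multiset.sum_add, π.parts_sum, Icc_val_sum] at h3
    omega

theorem sigma_mex_formula (n : ℕ) (hn : 0 < n) :
    ∑ π : Nat.Partition n, mex π =
      ∑ m ∈ Finset.range (n + 1), pz ((n : ℤ) - (m * (m + 1) / 2 : ℕ)) := by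
  classical
  have step1 : ∀ π : Nat.Partition n,
      mex π = ∑ m ∈ Finset.range (n+1), if m < mex π then 1 else 0 := by
    intro π
    rw [← Finset.card_filter]
    have : (Finset.range (n+1)).filter (fun m => m < mex π) = Finset.range (mex π) := by
      ext x
      simp only [Finset.mem_filter, Finset.mem_range]
      have := mex_le π
      omega
    rw [this, Finset.card_range]
  calc ∑ π : Nat.Partition n, mex π
      = ∑ π : Nat.Partition n, ∑ m ∈ Finset.range (n+1), if m < mex π then 1 else 0 :=
        Finset.sum_congr rfl fun π _ => step1 π
    _ = ∑ m ∈ Finset.range (n+1), ∑ π : Nat.Partition n, if m < mex π then 1 else 0 :=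
        Finset.sum_comm
    _ = ∑ m ∈ Finset.range (n+1), pz ((n : ℤ) - (m * (m + 1) / 2 : ℕ)) := by
        refine Finset.sum_congr rfl fun m _ => ?_
        rw [← Finset.card_filter, ← card_contains n m]
        congr 1
        apply Finset.filter_congr
        intro π _
        exact mex_gt_iff π m
end

section
/- Let t_m = m(m+1)/2. For every positive integer n, Σ_{π ⊢ n, mex(π) odd} mex(π) = Σ_{m≥0} (2m+1) (p(n − t_{2m}) − p(n − t_{2m+1})), with p(j)=0 for j<0. -/
open Finset

/- ## Auxiliary lemmas -/

lemma parts_le_n {n : ℕ} (π : Nat.Partition n) {a : ℕ} (ha : a ∈ π.parts) : a ≤ n := by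
  have := Multiset.single_le_sum (fun x _ => Nat.zero_le x) a ha
  rwa [π.parts_sum] at this

lemma mex_mem {n : ℕ} (π : Nat.Partition n) : 0 < mex π ∧ mex π ∉ π.parts := by
  have hne : ((n + 1) : ℕ) ∈ {m : ℕ | 0 < m ∧ m ∉ π.parts} :=
    ⟨Nat.succ_pos n, fun h => absurd (parts_le_n π h) (by omega)⟩
  exact Nat.sInf_mem ⟨_, hne⟩

lemma lt_mex_iff {n m : ℕ} (π : Nat.Partition n) :
    m < mex π ↔ ∀ i, 0 < i → i ≤ m → i ∈ π.parts := by
  constructor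
  · intro h i hi him
    by_contra hmem
    have : mex π ≤ i :=
      Nat.sInf_le (show i ∈ {m : ℕ | 0 < m ∧ m ∉ π.parts} from ⟨hi, hmem⟩)
    omega
  · intro h
    rcases Nat.lt_or_ge m (mex π) with h' | h'
    · exact h'
    · exact absurd (h _ (mex_mem π).1 h') (mex_mem π).2

/-- The triangular number as a sum. -/
def T (m : ℕ) : ℕ := ∑ i ∈ Icc 1 m, i

lemma T_two (m : ℕ) : T m * 2 = m * (m + 1) := by
  induction m with
  | zero => simp [T]
  | succ k ih =>
    rw [T, Finset.sum_Icc_succ_top (by omega)]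
    show (T k + (k + 1)) * 2 = _
    nlinarith [ih]

lemma icc_val_sum (m : ℕ) : (Icc 1 m).val.sum = T m := by
  calc (Icc 1 m).val.sum = ((Icc 1 m).val.map (fun i => i)).sum := by
        rw [Multiset.map_id']
    _ = T m := Finset.sum_map_val _ _

lemma lt_mex_iff_le {n m : ℕ} (π : Nat.Partition n) :
    m < mex π ↔ (Icc 1 m).val ≤ π.parts := by
  rw [lt_mex_iff, Multiset.le_iff_subset (Icc 1 m).nodup]
  constructor
  · intro h i hi
    rw [Finset.mem_val, Finset.mem_Icc] at hi
    exact h i (by omega) hi.2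
  · intro h i hi him
    exact h (by rw [Finset.mem_val, Finset.mem_Icc]; omega)

/-- Number of partitions of `n` whose mex exceeds `m` equals `p(n - T m)`. -/
lemma count_gt (m n : ℕ) :
    (Finset.univ.filter (fun π : Nat.Partition n => m < mex π)).card
      = pz ((n : ℤ) - (T m : ℤ)) := by
  by_cases h : T m ≤ n
  · rw [pz, if_pos (by push_cast; omega)]
    have htn : (((n : ℤ) - (T m : ℤ)).toNat) = n - T m := by omega
    rw [htn, ← Finset.card_univ]
    refine Finset.card_bij'
      (i := fun π hπ =>
        ⟨π.parts - (Icc 1 m).val,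
         fun {i} hi => π.parts_pos (Multiset.mem_of_le (Multiset.sub_le_self _ _) hi),
         by
           have hle : (Icc 1 m).val ≤ π.parts :=
             (lt_mex_iff_le π).1 (by simpa using hπ)
           have := tsub_add_cancel_of_le hle
           have hsum : (π.parts - (Icc 1 m).val).sum + (Icc 1 m).val.sum = n := by
             rw [← Multiset.sum_add, this, π.parts_sum]
           rw [icc_val_sum] at hsum
           omega⟩)
      (j := fun π _ =>
        ⟨π.parts + (Icc 1 m).val,
         fun {i} hi => by
           rcases Multiset.mem_add.1 hi with h1 | h1
           · exact π.parts_pos h1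
           · rw [Finset.mem_val, Finset.mem_Icc] at h1; omega,
         by rw [Multiset.sum_add, π.parts_sum, icc_val_sum]; omega⟩)
      ?_ ?_ ?_ ?_
    · intro a ha; exact Finset.mem_univ _
    · intro a _
      simp only [Finset.mem_filter, Finset.mem_univ, true_and]
      rw [lt_mex_iff_le]
      exact Multiset.le_add_left _ _
    · intro a ha
      have hle : (Icc 1 m).val ≤ a.parts := (lt_mex_iff_le a).1 (by simpa using ha)
      exact Nat.Partition.ext (tsub_add_cancel_of_le hle)
    · intro a _
      exact Nat.Partition.ext (add_tsub_cancel_right _ _)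
  · rw [pz, if_neg (by push_cast; omega)]
    rw [Finset.card_eq_zero]
    rw [Finset.filter_eq_empty_iff]
    intro π _
    intro hc
    have hle : (Icc 1 m).val ≤ π.parts := (lt_mex_iff_le π).1 hc
    have h2 := tsub_add_cancel_of_le hle
    have h3 : (π.parts - (Icc 1 m).val).sum + (Icc 1 m).val.sum = n := by
      rw [← Multiset.sum_add, h2, π.parts_sum]
    rw [icc_val_sum] at h3
    omega

lemma count_split (m n : ℕ) :
    (Finset.univ.filter (fun π : Nat.Partition n => m < mex π)).card
      = pmex (m + 1) n
        + (Finset.univ.filter (fun π : Nat.Partition n => m + 1 < mex π)).card := by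
  classical
  rw [pmex, ← Finset.card_union_of_disjoint]
  · congr 1
    ext π
    simp only [Finset.mem_filter, Finset.mem_union, Finset.mem_univ, true_and]
    omega
  · rw [Finset.disjoint_left]
    intro π h1 h2
    simp only [Finset.mem_filter, Finset.mem_univ, true_and] at h1 h2
    omega

theorem sigma_odd_mex_formula (n : ℕ) (hn : 0 < n) :
    ∑ π ∈ Finset.univ.filter (fun π : Nat.Partition n => Odd (mex π)), (mex π : ℤ) =
      ∑ m ∈ Finset.range (n + 1), (2 * (m : ℤ) + 1) *
        (pz ((n : ℤ) - ((2 * m) * (2 * m + 1) / 2 : ℕ)) -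
          pz ((n : ℤ) - ((2 * m + 1) * (2 * m + 2) / 2 : ℕ))) := by
  classical
  have hT1 : ∀ m : ℕ, (2 * m) * (2 * m + 1) / 2 = T (2 * m) := by
    intro m
    have h := T_two (2 * m)
    set a := T (2 * m)
    set b := (2 * m) * (2 * m + 1) with hb
    omega
  have hT2 : ∀ m : ℕ, (2 * m + 1) * (2 * m + 2) / 2 = T (2 * m + 1) := by
    intro m
    have h := T_two (2 * m + 1)
    set a := T (2 * m + 1)
    set b := (2 * m + 1) * (2 * m + 2) with hb
    omega
  have hRHS : ∀ m ∈ Finset.range (n + 1),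
      (2 * (m : ℤ) + 1) *
        ((pz ((n : ℤ) - ((2 * m) * (2 * m + 1) / 2 : ℕ)) : ℤ) -
          (pz ((n : ℤ) - ((2 * m + 1) * (2 * m + 2) / 2 : ℕ)) : ℤ))
      = (2 * (m : ℤ) + 1) * (pmex (2 * m + 1) n : ℤ) := by
    intro m _
    rw [hT1 m, hT2 m, ← count_gt, ← count_gt, count_split (2 * m) n]
    push_cast
    ring
  rw [Finset.sum_congr rfl hRHS]
  -- now handle the LHS
  have hU : Finset.univ.filter (fun π : Nat.Partition n => Odd (mex π))
      = (Finset.range (n + 1)).biUnion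
          (fun m => Finset.univ.filter (fun π : Nat.Partition n => mex π = 2 * m + 1)) := by
    ext π
    simp only [Finset.mem_filter, Finset.mem_biUnion, Finset.mem_range, Finset.mem_univ,
      true_and]
    rw [Nat.odd_iff]
    have h1 := mex_le π
    constructor
    · intro h
      exact ⟨(mex π - 1) / 2, by omega, by omega⟩
    · rintro ⟨m, _, hm⟩
      omega
  rw [hU, Finset.sum_biUnion]
  · refine Finset.sum_congr rfl fun m _ => ?_
    have : ∀ π ∈ Finset.univ.filter (fun π : Nat.Partition n => mex π = 2 * m + 1),
        (mex π : ℤ) = 2 * (m : ℤ) + 1 := by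
      intro π hπ
      simp only [Finset.mem_filter, Finset.mem_univ, true_and] at hπ
      rw [hπ]; push_cast; ring
    rw [Finset.sum_congr rfl this, Finset.sum_const, pmex, nsmul_eq_mul, mul_comm]
  · intro x hx y hy hxy
    simp only [Function.onFun]
    rw [Finset.disjoint_left]
    intro π h1 h2
    simp only [Finset.mem_filter, Finset.mem_univ, true_and] at h1 h2
    exact hxy (by omega)
end
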